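/- arXiv:1903.09850 — 2 statements merged into one kernel-verified Lean document; each statement's English description precedes it below -/
import Mathlib

section
/- Let AD be an action description of AL_IR and τ(AD) its transition diagram. If ⟨σ₀,a₀,σ₁⟩ is a transition of τ(AD), then there exist a qualifier q₀ ⊆ 𝓕 and an answer set A of the ASP program Φ¹(σ₀,a₀,q₀) such that σ₁ = {l | χ(l,1) ∈ A} ∪ {u(f) | u(f,1) ∈ A}. -/
/- Formalization of the action language AL_IR, its transition-diagram semantics,
   forcing/completion/conservative expansion, the ASP translation, and the
   FindMatch algorithm, following Balduccini & LeBlanc,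
   "Action-Centered Information Retrieval". -/

namespace ACIR

/-- Extended literals over a set `F` of fluents: a fluent `f`, its negation `¬f`,
or the expression `u(f)` ("unknown"). -/
inductive ELit (F : Type) : Type
  | pos : F → ELit F
  | neg : F → ELit F
  | und : F → ELit F

/-- Fluent literals: a fluent or its negation. -/
inductive FLit (F : Type) : Type
  | pos : F → FLit F
  | neg : F → FLit F

/-- The extended literal corresponding to a fluent literal. -/
def FLit.toE {F : Type} : FLit F → ELit F
  | .pos f => .pos f
  | .neg f => .neg f

/-- An extended literal is a (proper) fluent literal, i.e. not of the form `u(f)`. -/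
def ELit.isLit {F : Type} : ELit F → Prop
  | .pos _ => True
  | .neg _ => True
  | .und _ => False

/-- The fluent occurring in an extended literal. -/
def ELit.fluent {F : Type} : ELit F → F
  | .pos f => f
  | .neg f => f
  | .und f => f

/-- A set of extended literals consists solely of fluent literals. -/
def IsLitSet {F : Type} (S : Set (ELit F)) : Prop := ∀ l ∈ S, l.isLit

/-- A set of extended literals is consistent: for every fluent `f`, at most one of
`f`, `¬f`, `u(f)` belongs to it. -/
def ConsistentE {F : Type} (S : Set (ELit F)) : Prop :=
  ∀ f : F, ¬ (ELit.pos f ∈ S ∧ ELit.neg f ∈ S) ∧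
           ¬ (ELit.pos f ∈ S ∧ ELit.und f ∈ S) ∧
           ¬ (ELit.neg f ∈ S ∧ ELit.und f ∈ S)

/-- A set of extended literals is complete: for every fluent `f`, at least one of
`f`, `¬f`, `u(f)` belongs to it. -/
def CompleteE {F : Type} (S : Set (ELit F)) : Prop :=
  ∀ f : F, ELit.pos f ∈ S ∨ ELit.neg f ∈ S ∨ ELit.und f ∈ S

/-- A state constraint `l₀ if l₁,…,lₙ` (head and body are fluent literals). -/
structure StateConstraint (F : Type) : Type where
  head : FLit F
  body : List (FLit F)

/-- A dynamic law `e causes λ if l₁,…,lₙ` (the consequence is an extended literal). -/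
structure DynamicLaw (F E : Type) : Type where
  act : E
  eff : ELit F
  cond : List (FLit F)

/-- An executability condition `e impossible_if l₁,…,lₙ`. -/
structure ExecCond (F E : Type) : Type where
  act : E
  cond : List (FLit F)

/-- An action description of AL_IR. -/
structure ActionDesc (F E : Type) : Type where
  dyn : Set (DynamicLaw F E)
  sc : Set (StateConstraint F)
  exec : Set (ExecCond F E)

/-- `S` is closed under the state constraint `c`: either the body is not contained
in `S` or the head belongs to `S`. -/
def ClosedUnderSC {F : Type} (c : StateConstraint F) (S : Set (ELit F)) : Prop :=
  (∀ l ∈ c.body, l.toE ∈ S) → c.head.toE ∈ S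

/-- `Cn Z S`: the smallest set of extended literals containing `S` and closed
under every state constraint in `Z`. -/
def Cn {F : Type} (Z : Set (StateConstraint F)) (S : Set (ELit F)) : Set (ELit F) :=
  ⋂₀ {T | S ⊆ T ∧ ∀ c ∈ Z, ClosedUnderSC c T}

/-- A state of an action description: a complete and consistent set of extended
literals closed under the state constraints. -/
def IsState {F E : Type} (AD : ActionDesc F E) (σ : Set (ELit F)) : Prop :=
  CompleteE σ ∧ ConsistentE σ ∧ ∀ c ∈ AD.sc, ClosedUnderSC c σ

/-- The direct effects `E(a,σ)` of action `a` (a set of elementary actions) in `σ`. -/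
def directEff {F E : Type} (AD : ActionDesc F E) (a : Set E) (σ : Set (ELit F)) :
    Set (ELit F) :=
  {lam | ∃ d ∈ AD.dyn, d.act ∈ a ∧ (∀ l ∈ d.cond, l.toE ∈ σ) ∧ lam = d.eff}

/-- The expansion `𝔼(a,σ)`: the join of the fluent-literal part of `E(a,σ)` with
`{f,¬f,u(f)}` for every fluent `f` with `u(f) ∈ E(a,σ)`. -/
def expansion {F E : Type} (AD : ActionDesc F E) (a : Set E) (σ : Set (ELit F)) :
    Set (Set (ELit F)) :=
  {W | ∃ c : F → ELit F,
    (∀ f : F, ELit.und f ∈ directEff AD a σ →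
      (c f = ELit.pos f ∨ c f = ELit.neg f ∨ c f = ELit.und f)) ∧
    W = {l ∈ directEff AD a σ | l.isLit} ∪
        {l | ∃ f : F, ELit.und f ∈ directEff AD a σ ∧ l = c f}}

/-- Action `a` is executable in `σ`: no executability condition applies. -/
def Executable {F E : Type} (AD : ActionDesc F E) (a : Set E) (σ : Set (ELit F)) : Prop :=
  ¬ ∃ ec ∈ AD.exec, ec.act ∈ a ∧ ∀ l ∈ ec.cond, l.toE ∈ σ

/-- `⟨σ,a,σ'⟩` is a transition of the transition diagram `τ(AD)`:
`σ`,`σ'` are states, `a` is executable in `σ`, and the expanded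
successor-state equation holds for some `W ∈ 𝔼(a,σ)`. -/
def IsTransition {F E : Type} (AD : ActionDesc F E)
    (σ : Set (ELit F)) (a : Set E) (σ' : Set (ELit F)) : Prop :=
  IsState AD σ ∧ IsState AD σ' ∧ Executable AD a σ ∧
  ∃ W ∈ expansion AD a σ, σ' = Cn AD.sc (W ∪ (σ ∩ σ'))

/-- A sequence `⟨σ₀,a₀,σ₁,…,a_{n-1},σ_n⟩`. -/
structure Path (F E : Type) (n : ℕ) : Type where
  states : Fin (n + 1) → Set (ELit F)
  acts : Fin n → Set E

/-- `π` is a path of `τ(AD)`: every triple is a transition. -/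
def IsPath {F E : Type} {n : ℕ} (AD : ActionDesc F E) (π : Path F E n) : Prop :=
  ∀ i : Fin n, IsTransition AD (π.states i.castSucc) (π.acts i) (π.states i.succ)

/-- The branching-set of a transition. -/
def branchSet {F E : Type} (AD : ActionDesc F E)
    (σ : Set (ELit F)) (a : Set E) (σ' : Set (ELit F)) : Set F :=
  {f | ELit.und f ∈ directEff AD a σ ∧ ELit.und f ∉ σ'}

/-- A qualified action sequence `⟨a₀/q₀,…,a_{n-1}/q_{n-1}⟩`. -/
structure QSeq (F E : Type) (n : ℕ) : Type where
  acts : Fin n → Set E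
  quals : Fin n → Set F

/-- The branching degree `Δ(s) = |q₀| + ⋯ + |q_{n-1}|`. -/
noncomputable def QSeq.degree {F E : Type} {n : ℕ} (s : QSeq F E n) : ℕ :=
  ∑ i : Fin n, (s.quals i).ncard

/-- `s` extends the action sequence `ℵ` (any choice of qualifiers). -/
def QSeq.Extends {F E : Type} {n : ℕ} (s : QSeq F E n) (ℵ : Fin n → Set E) : Prop :=
  s.acts = ℵ

/-- `ℵ^×`: the extension of `ℵ` in which every qualifier is the whole set `𝓕`. -/
def qall {F E : Type} {n : ℕ} (ℵ : Fin n → Set E) : QSeq F E n :=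
  ⟨ℵ, fun _ => Set.univ⟩

/-- `ℵ^?`: the extension of `ℵ` in which every qualifier is empty. -/
def qnone {F E : Type} {n : ℕ} (ℵ : Fin n → Set E) : QSeq F E n :=
  ⟨ℵ, fun _ => ∅⟩

/-- The empty qualified action sequence `⟨⟩`. -/
def emptyQ {F E : Type} : QSeq F E 0 := ⟨fun i => i.elim0, fun i => i.elim0⟩

/-- `π` is a model of `[Σ, s]`: `π` is a path of `τ(AD)` starting at some state of
`Σ`, executing the actions of `s`, and the branching-set of each transition equals
the corresponding qualifier. -/
def IsModel {F E : Type} {n : ℕ} (AD : ActionDesc F E) (π : Path F E n)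
    (Sig : Set (Set (ELit F))) (s : QSeq F E n) : Prop :=
  IsPath AD π ∧ π.states 0 ∈ Sig ∧ π.acts = s.acts ∧
  ∀ i : Fin n, branchSet AD (π.states i.castSucc) (π.acts i) (π.states i.succ) = s.quals i

/-- `π` entails the fluent literal `l`: `l` belongs to the final state of `π`. -/
def Entails {F E : Type} {n : ℕ} (π : Path F E n) (l : FLit F) : Prop :=
  l.toE ∈ π.states (Fin.last n)

/-- `π ⊨ ±q`: `π` entails `q` or `π` entails `¬q`. -/
def EntailsPM {F E : Type} {n : ℕ} (π : Path F E n) (q : F) : Prop :=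
  Entails π (FLit.pos q) ∨ Entails π (FLit.neg q)

/-! ### Forcing, completion, conservative expansion -/

/-- The possible "added" sets in the forcing `I[f]` of a fluent `f` in `I`,
relative to the set `D` of default fluents. -/
def forceChoices {F : Type} (D : Set F) (I : Set (ELit F)) (f : F) :
    Set (Set (ELit F)) :=
  {X | (f ∈ D ∧ ELit.neg f ∉ I ∧ ELit.und f ∉ I ∧ X = {ELit.pos f})
     ∨ (f ∉ D ∧ ELit.pos f ∉ I ∧ ELit.neg f ∉ I ∧ ELit.und f ∉ I ∧
          (X = {ELit.pos f} ∨ X = {ELit.neg f}))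
     ∨ (¬ ((f ∈ D ∧ ELit.neg f ∉ I ∧ ELit.und f ∉ I) ∨
           (f ∉ D ∧ ELit.pos f ∉ I ∧ ELit.neg f ∉ I ∧ ELit.und f ∉ I)) ∧ X = ∅)}

/-- The forcing `I[f]` of a single fluent `f` in `I`. -/
def forceOne {F : Type} (D : Set F) (I : Set (ELit F)) (f : F) :
    Set (Set (ELit F)) :=
  {J | ∃ X ∈ forceChoices D I f, J = I ∪ X}

/-- The forcing `I[Fs]` of a set `Fs` of fluents in `I`: each fluent of `Fs` is
forced independently (the recursive definition of the paper). -/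
def forceSet {F : Type} (D : Set F) (I : Set (ELit F)) (Fs : Set F) :
    Set (Set (ELit F)) :=
  {J | ∃ c : F → Set (ELit F),
        (∀ f ∈ Fs, c f ∈ forceChoices D I f) ∧ J = I ∪ ⋃ f ∈ Fs, c f}

/-- `Cn_Z(I')` where `I'` expands `I` by `¬f` for every default fluent `f ∉ I`. -/
def gammaBase {F E : Type} (D : Set F) (AD : ActionDesc F E) (I : Set (ELit F)) :
    Set (ELit F) :=
  Cn AD.sc (I ∪ {l | ∃ f ∈ D, ELit.pos f ∉ I ∧ l = ELit.neg f})

/-- The completion `γ(I)` exists iff `Cn_Z(I')` is consistent. -/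
def GammaExists {F E : Type} (D : Set F) (AD : ActionDesc F E) (I : Set (ELit F)) :
    Prop :=
  ConsistentE (gammaBase D AD I)

/-- Fluent `f` occurs in some literal of `S`. -/
def fOccurs {F : Type} (f : F) (S : Set (ELit F)) : Prop := ∃ l ∈ S, l.fluent = f

/-- The completion `γ(I)`: `Cn_Z(I')` together with `u(f)` for every fluent `f`
occurring in no literal of `Cn_Z(I')` (meaningful when `GammaExists` holds). -/
def gamma {F E : Type} (D : Set F) (AD : ActionDesc F E) (I : Set (ELit F)) :
    Set (ELit F) :=
  gammaBase D AD I ∪ {l | ∃ f : F, ¬ fOccurs f (gammaBase D AD I) ∧ l = ELit.und f}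

/-- The completion `γ(I,Fs)` of `I` w.r.t. a set `Fs` of fluents:
`{γ(I') | I' ∈ I[Fs], γ(I') exists}`. Its degree is `|Fs|`. -/
def gammaSet {F E : Type} (D : Set F) (AD : ActionDesc F E)
    (I : Set (ELit F)) (Fs : Set F) : Set (Set (ELit F)) :=
  {J | ∃ I' ∈ forceSet D I Fs, GammaExists D AD I' ∧ J = gamma D AD I'}

/-- The family of sets `I' ∈ I[𝓕∖𝓓]` such that `γ(I')` exists and
`[γ(I'), ℵ^×]` has a model. -/
def epsFamily {F E : Type} (D : Set F) (AD : ActionDesc F E)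
    (I : Set (ELit F)) {n : ℕ} (ℵ : Fin n → Set E) : Set (Set (ELit F)) :=
  {I' | I' ∈ forceSet D I (Set.univ \ D) ∧ GammaExists D AD I' ∧
        ∃ π : Path F E n, IsModel AD π {gamma D AD I'} (qall ℵ)}

/-- The conservative expansion `ε(I,ℵ)` exists iff the family is nonempty. -/
def EpsExists {F E : Type} (D : Set F) (AD : ActionDesc F E)
    (I : Set (ELit F)) {n : ℕ} (ℵ : Fin n → Set E) : Prop :=
  (epsFamily D AD I ℵ).Nonempty

/-- The conservative expansion `ε(I,ℵ)`: the intersection of all members of the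
family (meaningful when `EpsExists` holds). -/
def eps {F E : Type} (D : Set F) (AD : ActionDesc F E)
    (I : Set (ELit F)) {n : ℕ} (ℵ : Fin n → Set E) : Set (ELit F) :=
  ⋂₀ epsFamily D AD I ℵ

/-! ### Matching and semantic score -/

/-- `Fs` and `s` witness that the source `⟨Ψ,𝓓,AD,I,ℵ⟩` is a match for query `q`:
conditions (c1) and (c2) of the paper. -/
def MatchWitness {F E : Type} (D : Set F) (AD : ActionDesc F E)
    {n : ℕ} (I : Set (ELit F)) (ℵ : Fin n → Set E) (q : F)
    (Fs : Set F) (s : QSeq F E n) : Prop :=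
  s.Extends ℵ ∧
  ∃ π : Path F E n,
    IsModel AD π (gammaSet D AD (eps D AD I ℵ) Fs) s ∧ EntailsPM π q ∧
    ∀ π' : Path F E 0,
      IsModel AD π' (gammaSet D AD (π.states 0 \ eps D AD I ℵ) ∅) emptyQ →
      (¬ EntailsPM π' q) ∨
      (Entails π' (FLit.neg q) ∧ Entails π (FLit.pos q)) ∨
      (Entails π' (FLit.pos q) ∧ Entails π (FLit.neg q))

/-- The source `⟨Ψ,𝓓,AD,I,ℵ⟩` is a match for the query `q`. -/
def IsMatch {F E : Type} (D : Set F) (AD : ActionDesc F E)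
    {n : ℕ} (I : Set (ELit F)) (ℵ : Fin n → Set E) (q : F) : Prop :=
  ∃ (Fs : Set F) (s : QSeq F E n), MatchWitness D AD I ℵ q Fs s

/-- The semantic score of the source w.r.t. `q`: the smallest value of
`Δ(γ(ε(I,ℵ),F)) + Δ(s) = |F| + Δ(s)` over all witnesses; `∞` if no match. -/
noncomputable def semScore {F E : Type} (D : Set F) (AD : ActionDesc F E)
    {n : ℕ} (I : Set (ELit F)) (ℵ : Fin n → Set E) (q : F) : ℕ∞ :=
  sInf {v : ℕ∞ | ∃ (Fs : Set F) (s : QSeq F E n),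
    MatchWitness D AD I ℵ q Fs s ∧ v = ((Fs.ncard + s.degree : ℕ) : ℕ∞)}

/-! ### Answer Set Programming -/

/-- ASP literals over a set `A` of ground atoms: an atom or its (classical) negation. -/
inductive ALit (A : Type) : Type
  | pos : A → ALit A
  | neg : A → ALit A

/-- The atom of an ASP literal. -/
def ALit.atom {A : Type} : ALit A → A
  | .pos a => a
  | .neg a => a

/-- An ASP rule `h₁ ∨ ⋯ ∨ h_k ← l₁,…,l_m, not l_{m+1},…, not l_n`. -/
structure Rule (A : Type) : Type where
  head : List (ALit A)
  bodyP : List (ALit A)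
  bodyN : List (ALit A)

/-- A fact. -/
def fact {A : Type} (l : ALit A) : Rule A := ⟨[l], [], []⟩

/-- A consistent set of ASP literals. -/
def AConsistent {A : Type} (S : Set (ALit A)) : Prop :=
  ∀ a : A, ¬ (ALit.pos a ∈ S ∧ ALit.neg a ∈ S)

/-- `S` is closed under the rule `r`. -/
def ClosedRule {A : Type} (r : Rule A) (S : Set (ALit A)) : Prop :=
  ((∀ l ∈ r.bodyP, l ∈ S) ∧ (∀ l ∈ r.bodyN, l ∉ S)) → ∃ h ∈ r.head, h ∈ S

/-- The reduct `Π^S`. -/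
def Reduct {A : Type} (P : Set (Rule A)) (S : Set (ALit A)) : Set (Rule A) :=
  {r' | ∃ r ∈ P, (∀ l ∈ r.bodyN, l ∉ S) ∧ r' = ⟨r.head, r.bodyP, []⟩}

/-- `S` is an answer set of a `not`-free program: a minimal consistent set closed
under all rules. -/
def IsAnswerSetNF {A : Type} (P : Set (Rule A)) (S : Set (ALit A)) : Prop :=
  AConsistent S ∧ (∀ r ∈ P, ClosedRule r S) ∧
  ∀ T : Set (ALit A), AConsistent T → (∀ r ∈ P, ClosedRule r T) → T ⊆ S → T = S

/-- `S` is an answer set of `P`: `S` is an answer set of the reduct `P^S`. -/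
def IsAnswerSet {A : Type} (P : Set (Rule A)) (S : Set (ALit A)) : Prop :=
  IsAnswerSetNF (Reduct P S) S

/-! ### The ASP translation of AL_IR -/

/-- Ground atoms of the translation. -/
inductive PAtom (F E : Type) : Type
  | holds : F → ℕ → PAtom F E
  | u : F → ℕ → PAtom F E
  | occurs : E → ℕ → PAtom F E
  | split : F → ℕ → PAtom F E
  | init : F → PAtom F E
  | forced : F → PAtom F E
  | dflt : F → PAtom F E

/-- `χ(l,t)`: `holds(f,t)` if `l = f`, `¬holds(f,t)` if `l = ¬f`. -/
def chi {F E : Type} : FLit F → ℕ → ALit (PAtom F E)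
  | .pos f, t => .pos (.holds f t)
  | .neg f, t => .neg (.holds f t)

/-- The rules translating the laws of `AD` (for `n` time steps), together with the
consistency constraints and the inertia axioms. -/
def CoreProg {F E : Type} (AD : ActionDesc F E) (n : ℕ) : Set (Rule (PAtom F E)) :=
  -- dynamic laws with a fluent-literal consequence
  {r | ∃ d ∈ AD.dyn, ∃ t : ℕ, t < n ∧ ∃ l : FLit F, d.eff = l.toE ∧
      r = ⟨[chi l (t+1)],
           .pos (.occurs d.act t) :: d.cond.map (fun b => chi b t), []⟩} ∪
  -- dynamic laws with consequence u(f): non-split rule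
  {r | ∃ d ∈ AD.dyn, ∃ t : ℕ, t < n ∧ ∃ f : F, d.eff = ELit.und f ∧
      r = ⟨[.pos (.u f (t+1))],
           .pos (.occurs d.act t) :: d.cond.map (fun b => chi b t),
           [.pos (.split f t)]⟩} ∪
  -- dynamic laws with consequence u(f): split rule
  {r | ∃ d ∈ AD.dyn, ∃ t : ℕ, t < n ∧ ∃ f : F, d.eff = ELit.und f ∧
      r = ⟨[chi (FLit.pos f) (t+1), chi (FLit.neg f) (t+1)],
           .pos (.occurs d.act t) :: .pos (.split f t) ::
             d.cond.map (fun b => chi b t), []⟩} ∪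
  -- state constraints
  {r | ∃ c ∈ AD.sc, ∃ t : ℕ, t ≤ n ∧
      r = ⟨[chi c.head t], c.body.map (fun b => chi b t), []⟩} ∪
  -- executability conditions
  {r | ∃ ec ∈ AD.exec, ∃ t : ℕ, t < n ∧
      r = ⟨[], .pos (.occurs ec.act t) :: ec.cond.map (fun b => chi b t), []⟩} ∪
  -- consistency constraints
  {r | ∃ f : F, ∃ t : ℕ, t ≤ n ∧
      r = ⟨[], [chi (FLit.pos f) t, .pos (.u f t)], []⟩} ∪
  {r | ∃ f : F, ∃ t : ℕ, t ≤ n ∧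
      r = ⟨[], [chi (FLit.neg f) t, .pos (.u f t)], []⟩} ∪
  -- inertia axioms
  {r | ∃ f : F, ∃ t : ℕ, t < n ∧
      r = ⟨[chi (FLit.pos f) (t+1)], [chi (FLit.pos f) t],
           [chi (FLit.neg f) (t+1), .pos (.u f (t+1))]⟩} ∪
  {r | ∃ f : F, ∃ t : ℕ, t < n ∧
      r = ⟨[chi (FLit.neg f) (t+1)], [chi (FLit.neg f) t],
           [chi (FLit.pos f) (t+1), .pos (.u f (t+1))]⟩} ∪
  {r | ∃ f : F, ∃ t : ℕ, t < n ∧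
      r = ⟨[.pos (.u f (t+1))], [.pos (.u f t)],
           [chi (FLit.pos f) (t+1), chi (FLit.neg f) (t+1)]⟩}

/-- Facts `occurs(e,i)` and `split(f,i)` encoding a qualified action sequence. -/
def occSplitFacts {F E : Type} {n : ℕ} (s : QSeq F E n) : Set (Rule (PAtom F E)) :=
  {r | ∃ i : Fin n, ∃ e ∈ s.acts i, r = fact (.pos (.occurs e (i : ℕ)))} ∪
  {r | ∃ i : Fin n, ∃ f ∈ s.quals i, r = fact (.pos (.split f (i : ℕ)))}

/-- The program `Φⁿ(σ₀, s)`: the translation of `AD` plus the facts encoding the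
initial state `σ₀` and the qualified action sequence `s`. -/
def PhiProg {F E : Type} (AD : ActionDesc F E) {n : ℕ}
    (σ0 : Set (ELit F)) (s : QSeq F E n) : Set (Rule (PAtom F E)) :=
  CoreProg AD n ∪
  {r | ∃ l : FLit F, l.toE ∈ σ0 ∧ r = fact (chi l 0)} ∪
  {r | ∃ f : F, ELit.und f ∈ σ0 ∧ r = fact (.pos (.u f 0))} ∪
  occSplitFacts s

/-- The initial-state axioms `[g₁]`,`[g₂]`,`[g₃]` of the paper. -/
def InitAxioms (F E : Type) : Set (Rule (PAtom F E)) :=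
  {r | ∃ f : F, r = ⟨[chi (FLit.pos f) 0], [.pos (.init f)], []⟩} ∪
  {r | ∃ f : F, r = ⟨[chi (FLit.neg f) 0], [.neg (.init f)], []⟩} ∪
  {r | ∃ f : F, r = ⟨[chi (FLit.pos f) 0], [.pos (.forced f), .pos (.dflt f)],
        [.neg (.init f)]⟩} ∪
  {r | ∃ f : F, r = ⟨[chi (FLit.pos f) 0, chi (FLit.neg f) 0], [.pos (.forced f)],
        [.pos (.dflt f), .pos (.init f), .neg (.init f)]⟩} ∪
  {r | ∃ f : F, r = ⟨[chi (FLit.neg f) 0], [.pos (.dflt f)], [chi (FLit.pos f) 0]⟩} ∪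
  {r | ∃ f : F, r = ⟨[.pos (.u f 0)], [],
        [.pos (.dflt f), chi (FLit.pos f) 0, chi (FLit.neg f) 0]⟩}

/-- The program `Π_AD(I,F,s)`. -/
def PiProg {F E : Type} (D : Set F) (AD : ActionDesc F E) {n : ℕ}
    (I : Set (ELit F)) (Fs : Set F) (s : QSeq F E n) : Set (Rule (PAtom F E)) :=
  CoreProg AD n ∪ InitAxioms F E ∪
  {r | ∃ f : F, ELit.pos f ∈ I ∧ r = fact (.pos (.init f))} ∪
  {r | ∃ f : F, ELit.neg f ∈ I ∧ r = fact (.neg (.init f))} ∪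
  {r | ∃ f ∈ Fs, r = fact (.pos (.forced f))} ∪
  {r | ∃ f ∈ D, r = fact (.pos (.dflt f))} ∪
  occSplitFacts s

/-- The state at step `i` decoded from an answer set `A`:
`{l | χ(l,i) ∈ A} ∪ {u(f) | u(f,i) ∈ A}`. -/
def decodeState {F E : Type} (A : Set (ALit (PAtom F E))) (i : ℕ) : Set (ELit F) :=
  {l | (∃ fl : FLit F, l = fl.toE ∧ chi fl i ∈ A) ∨
       (∃ f : F, l = ELit.und f ∧ ALit.pos (.u f i) ∈ A)}

/-- An answer set `A` encodes the path `π`. -/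
def Encodes {F E : Type} {n : ℕ} (A : Set (ALit (PAtom F E))) (π : Path F E n) : Prop :=
  (∀ l : FLit F, ∀ i : Fin (n+1), l.toE ∈ π.states i ↔ chi l (i : ℕ) ∈ A) ∧
  (∀ f : F, ∀ i : Fin (n+1), ELit.und f ∈ π.states i ↔ ALit.pos (.u f (i : ℕ)) ∈ A) ∧
  (∀ e : E, ∀ i : Fin n, e ∈ π.acts i ↔ ALit.pos (.occurs e (i : ℕ)) ∈ A)

/-! ### The FindMatch algorithm -/

/-- Step (1) of FindMatch: `R`, the intersection of all answer sets of
`Π_AD(I, 𝓕∖𝓓, ℵ^×)`. -/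
def FMR {F E : Type} (D : Set F) (AD : ActionDesc F E) {n : ℕ}
    (I : Set (ELit F)) (ℵ : Fin n → Set E) : Set (ALit (PAtom F E)) :=
  ⋂₀ {A | IsAnswerSet (PiProg D AD I (Set.univ \ D) (qall ℵ)) A}

/-- Step (1) of FindMatch: the set
`I' = I ∪ {l | {χ(l,0), forced(f)} ⊆ R, l = f or l = ¬f}`. -/
def FMI' {F E : Type} (D : Set F) (AD : ActionDesc F E) {n : ℕ}
    (I : Set (ELit F)) (ℵ : Fin n → Set E) : Set (ELit F) :=
  I ∪ {l | ∃ f : F,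
        ((l = ELit.pos f ∧ chi (FLit.pos f) 0 ∈ FMR D AD I ℵ) ∨
         (l = ELit.neg f ∧ chi (FLit.neg f) 0 ∈ FMR D AD I ℵ)) ∧
        ALit.pos (.forced f) ∈ FMR D AD I ℵ}

/-- The set `X` computed at step (4a) of FindMatch from an answer set `A` and `I'`. -/
def FMX {F E : Type} (I' : Set (ELit F)) (A : Set (ALit (PAtom F E))) : Set (ELit F) :=
  {l | ∃ f : F, ((l = ELit.pos f ∧ chi (FLit.pos f) 0 ∈ A) ∨
                 (l = ELit.neg f ∧ chi (FLit.neg f) 0 ∈ A)) ∧ l ∉ I'}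

/-- The pair `(Fs, s)` succeeds at steps (4)-(4c) of FindMatch with answer set `A`:
`A` is an answer set of `Π_AD(I',Fs,s)` containing `χ(q,k+1)` or `χ(¬q,k+1)`, and
every answer set `B` of `Π_AD(X,∅,⟨⟩)` passes the test of step (4b). -/
def PairSucceeds {F E : Type} (D : Set F) (AD : ActionDesc F E) {n : ℕ}
    (I' : Set (ELit F)) (q : F) (Fs : Set F) (s : QSeq F E n)
    (A : Set (ALit (PAtom F E))) : Prop :=
  IsAnswerSet (PiProg D AD I' Fs s) A ∧
  (chi (FLit.pos q) n ∈ A ∨ chi (FLit.neg q) n ∈ A) ∧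
  ∀ B : Set (ALit (PAtom F E)),
    IsAnswerSet (PiProg D AD (FMX I' A) (∅ : Set F) (emptyQ : QSeq F E 0)) B →
    ((chi (FLit.pos q) 0 ∉ B ∧ chi (FLit.neg q) 0 ∉ B) ∨
     (chi (FLit.pos q) 0 ∈ B ∧ chi (FLit.neg q) n ∈ A) ∨
     (chi (FLit.neg q) 0 ∈ B ∧ chi (FLit.pos q) n ∈ A))

/-- The possible return values of FindMatch(I,ℵ,q) other than `⊥`: an answer set `A`
of some pair `(Fs,s)` (with `s` extending `ℵ`) that succeeds, where `|Fs| + Δ(s)` is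
minimal among all succeeding pairs, and `Π_AD(I,𝓕∖𝓓,ℵ^×)` has an answer set. -/
def FMResults {F E : Type} (D : Set F) (AD : ActionDesc F E) {n : ℕ}
    (I : Set (ELit F)) (ℵ : Fin n → Set E) (q : F) :
    Set (Set (ALit (PAtom F E))) :=
  {A | (∃ S, IsAnswerSet (PiProg D AD I (Set.univ \ D) (qall ℵ)) S) ∧
    ∃ (Fs : Set F) (s : QSeq F E n), s.Extends ℵ ∧
      PairSucceeds D AD (FMI' D AD I ℵ) q Fs s A ∧
      ∀ (Fs' : Set F) (s' : QSeq F E n), s'.Extends ℵ →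
        (∃ A', PairSucceeds D AD (FMI' D AD I ℵ) q Fs' s' A') →
        Fs.ncard + s.degree ≤ Fs'.ncard + s'.degree}

open Classical in
/-- The FindMatch algorithm: returns an answer set encoding a path if a match
exists, `⊥` (here `none`) otherwise. -/
noncomputable def FindMatch {F E : Type} (D : Set F) (AD : ActionDesc F E) {n : ℕ}
    (I : Set (ELit F)) (ℵ : Fin n → Set E) (q : F) :
    Option (Set (ALit (PAtom F E))) :=
  if h : (FMResults D AD I ℵ q).Nonempty then some h.choose else none

/-- An atom is formed by the relations `forced` or `split`. -/
def isFS {F E : Type} : PAtom F E → Prop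
  | .forced _ => True
  | .split _ _ => True
  | _ => False

/-- `‖A‖`: the number of atoms of `A` formed by `forced` and `split`; `‖⊥‖ = ∞`. -/
noncomputable def normOpt {F E : Type} :
    Option (Set (ALit (PAtom F E))) → ℕ∞
  | none => ⊤
  | some A => (({x ∈ A | isFS x.atom}).ncard : ℕ∞)

end ACIR

namespace ACIR


/-! ### Auxiliary lemmas for Statement 5 -/

lemma FLit.toE_injective {F : Type} : Function.Injective (@FLit.toE F) := by
  intro a b h
  cases a <;> cases b <;> simp [FLit.toE] at h <;> simp [h]

lemma flit_exists {F : Type} {P : FLit F → Prop} :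
    (∃ l, P l) ↔ (∃ f, P (.pos f)) ∨ (∃ f, P (.neg f)) := by
  constructor
  · rintro ⟨l, h⟩
    cases l with
    | pos f => exact Or.inl ⟨f, h⟩
    | neg f => exact Or.inr ⟨f, h⟩
  · rintro (⟨f, h⟩ | ⟨f, h⟩) <;> exact ⟨_, h⟩

lemma subset_Cn {F : Type} {Z : Set (StateConstraint F)} {S : Set (ELit F)} :
    S ⊆ Cn Z S := by
  intro l hl T hT
  exact hT.1 hl

lemma Cn_min {F : Type} {Z : Set (StateConstraint F)} {S T : Set (ELit F)}
    (h1 : S ⊆ T) (h2 : ∀ c ∈ Z, ClosedUnderSC c T) : Cn Z S ⊆ T := by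
  intro l hl
  exact hl T ⟨h1, h2⟩

/-- The candidate answer set encoding transition `⟨σ0,a0,σ1⟩` with qualifier `q0`. -/
def encSet {F E : Type} (σ0 σ1 : Set (ELit F)) (a0 : Set E) (q0 : Set F) :
    Set (ALit (PAtom F E)) :=
  {x | (∃ f, ELit.pos f ∈ σ0 ∧ x = .pos (.holds f 0)) ∨
    (∃ f, ELit.neg f ∈ σ0 ∧ x = .neg (.holds f 0)) ∨
    (∃ f, ELit.und f ∈ σ0 ∧ x = .pos (.u f 0)) ∨
    (∃ f, ELit.pos f ∈ σ1 ∧ x = .pos (.holds f 1)) ∨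
    (∃ f, ELit.neg f ∈ σ1 ∧ x = .neg (.holds f 1)) ∨
    (∃ f, ELit.und f ∈ σ1 ∧ x = .pos (.u f 1)) ∨
    (∃ e, e ∈ a0 ∧ x = .pos (.occurs e 0)) ∨
    (∃ f, f ∈ q0 ∧ x = .pos (.split f 0))}

section enc
variable {F E : Type} {σ0 σ1 : Set (ELit F)} {a0 : Set E} {q0 : Set F}

@[simp] lemma enc_posholds {f : F} {t : ℕ} :
    (ALit.pos (.holds f t) : ALit (PAtom F E)) ∈ encSet σ0 σ1 a0 q0 ↔
      (t = 0 ∧ ELit.pos f ∈ σ0) ∨ (t = 1 ∧ ELit.pos f ∈ σ1) := by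
  simp only [encSet, Set.mem_setOf_eq]
  aesop

@[simp] lemma enc_negholds {f : F} {t : ℕ} :
    (ALit.neg (.holds f t) : ALit (PAtom F E)) ∈ encSet σ0 σ1 a0 q0 ↔
      (t = 0 ∧ ELit.neg f ∈ σ0) ∨ (t = 1 ∧ ELit.neg f ∈ σ1) := by
  simp only [encSet, Set.mem_setOf_eq]
  aesop

@[simp] lemma enc_u {f : F} {t : ℕ} :
    (ALit.pos (.u f t) : ALit (PAtom F E)) ∈ encSet σ0 σ1 a0 q0 ↔
      (t = 0 ∧ ELit.und f ∈ σ0) ∨ (t = 1 ∧ ELit.und f ∈ σ1) := by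
  simp only [encSet, Set.mem_setOf_eq]
  aesop

@[simp] lemma enc_occurs {e : E} {t : ℕ} :
    (ALit.pos (.occurs e t) : ALit (PAtom F E)) ∈ encSet σ0 σ1 a0 q0 ↔
      t = 0 ∧ e ∈ a0 := by
  simp only [encSet, Set.mem_setOf_eq]
  aesop

@[simp] lemma enc_split {f : F} {t : ℕ} :
    (ALit.pos (.split f t) : ALit (PAtom F E)) ∈ encSet σ0 σ1 a0 q0 ↔
      t = 0 ∧ f ∈ q0 := by
  simp only [encSet, Set.mem_setOf_eq]
  aesop

@[simp] lemma enc_negother_u {f : F} {t : ℕ} :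
    (ALit.neg (.u f t) : ALit (PAtom F E)) ∉ encSet σ0 σ1 a0 q0 := by
  simp only [encSet, Set.mem_setOf_eq]
  aesop

@[simp] lemma enc_negother_occurs {e : E} {t : ℕ} :
    (ALit.neg (.occurs e t) : ALit (PAtom F E)) ∉ encSet σ0 σ1 a0 q0 := by
  simp only [encSet, Set.mem_setOf_eq]
  aesop

@[simp] lemma enc_negother_split {f : F} {t : ℕ} :
    (ALit.neg (.split f t) : ALit (PAtom F E)) ∉ encSet σ0 σ1 a0 q0 := by
  simp only [encSet, Set.mem_setOf_eq]
  aesop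

lemma enc_chi {l : FLit F} {t : ℕ} :
    (chi l t : ALit (PAtom F E)) ∈ encSet σ0 σ1 a0 q0 ↔
      (t = 0 ∧ l.toE ∈ σ0) ∨ (t = 1 ∧ l.toE ∈ σ1) := by
  cases l <;> simp [chi, FLit.toE]

end enc

lemma decode_lit {F E : Type} (A : Set (ALit (PAtom F E))) (l : FLit F) (i : ℕ) :
    l.toE ∈ decodeState A i ↔ (chi l i : ALit (PAtom F E)) ∈ A := by
  simp only [decodeState, Set.mem_setOf_eq]
  constructor
  · rintro (⟨fl, heq, hm⟩ | ⟨f, heq, hm⟩)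
    · rwa [FLit.toE_injective heq]
    · cases l <;> simp [FLit.toE] at heq
  · intro hm
    exact Or.inl ⟨l, rfl, hm⟩

lemma decode_und {F E : Type} (A : Set (ALit (PAtom F E))) (f : F) (i : ℕ) :
    ELit.und f ∈ decodeState A i ↔ (ALit.pos (.u f i) : ALit (PAtom F E)) ∈ A := by
  simp only [decodeState, Set.mem_setOf_eq]
  constructor
  · rintro (⟨fl, heq, hm⟩ | ⟨f', heq, hm⟩)
    · cases fl <;> simp [FLit.toE] at heq
    · simp only [ELit.und.injEq] at heq
      rwa [heq]
  · intro hm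
    exact Or.inr ⟨f, rfl, hm⟩


lemma exists_flit_of_isLit {F : Type} {x : ELit F} (h : x.isLit) :
    ∃ l : FLit F, x = l.toE := by
  cases x with
  | pos f => exact ⟨.pos f, rfl⟩
  | neg f => exact ⟨.neg f, rfl⟩
  | und f => exact h.elim

/-- The qualifier chosen for Statement 5. -/
def qv {F E : Type} (AD : ActionDesc F E) (a0 : Set E) (σ0 : Set (ELit F))
    (c : F → ELit F) : Set F :=
  {f | ELit.und f ∈ directEff AD a0 σ0 ∧ ¬ c f = ELit.und f}

section stmt5aux

variable {F E : Type} {AD : ActionDesc F E} {σ0 σ1 : Set (ELit F)} {a0 : Set E}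
  {c : F → ELit F}

/-- Membership lemmas for `CoreProg`. -/
lemma mem_core1 {n : ℕ} {d : DynamicLaw F E} {t : ℕ} {l : FLit F}
    (hd : d ∈ AD.dyn) (ht : t < n) (hl : d.eff = l.toE) :
    (⟨[chi l (t+1)], .pos (.occurs d.act t) :: d.cond.map (fun b => chi b t), []⟩ :
      Rule (PAtom F E)) ∈ CoreProg AD n :=
  Set.mem_union_left _ (Set.mem_union_left _ (Set.mem_union_left _
    (Set.mem_union_left _ (Set.mem_union_left _ (Set.mem_union_left _
    (Set.mem_union_left _ (Set.mem_union_left _ (Set.mem_union_left _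
    ⟨d, hd, t, ht, l, hl, rfl⟩))))))))

lemma mem_core2 {n : ℕ} {d : DynamicLaw F E} {t : ℕ} {f : F}
    (hd : d ∈ AD.dyn) (ht : t < n) (hl : d.eff = ELit.und f) :
    (⟨[.pos (.u f (t+1))], .pos (.occurs d.act t) :: d.cond.map (fun b => chi b t),
      [.pos (.split f t)]⟩ : Rule (PAtom F E)) ∈ CoreProg AD n :=
  Set.mem_union_left _ (Set.mem_union_left _ (Set.mem_union_left _
    (Set.mem_union_left _ (Set.mem_union_left _ (Set.mem_union_left _
    (Set.mem_union_left _ (Set.mem_union_left _ (Set.mem_union_right _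
    ⟨d, hd, t, ht, f, hl, rfl⟩))))))))

lemma mem_core3 {n : ℕ} {d : DynamicLaw F E} {t : ℕ} {f : F}
    (hd : d ∈ AD.dyn) (ht : t < n) (hl : d.eff = ELit.und f) :
    (⟨[chi (FLit.pos f) (t+1), chi (FLit.neg f) (t+1)],
      .pos (.occurs d.act t) :: .pos (.split f t) :: d.cond.map (fun b => chi b t),
      []⟩ : Rule (PAtom F E)) ∈ CoreProg AD n :=
  Set.mem_union_left _ (Set.mem_union_left _ (Set.mem_union_left _
    (Set.mem_union_left _ (Set.mem_union_left _ (Set.mem_union_left _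
    (Set.mem_union_left _ (Set.mem_union_right _
    ⟨d, hd, t, ht, f, hl, rfl⟩)))))))

lemma mem_core4 {n : ℕ} {c0 : StateConstraint F} {t : ℕ}
    (hc0 : c0 ∈ AD.sc) (ht : t ≤ n) :
    (⟨[chi c0.head t], c0.body.map (fun b => chi b t), []⟩ :
      Rule (PAtom F E)) ∈ CoreProg AD n :=
  Set.mem_union_left _ (Set.mem_union_left _ (Set.mem_union_left _
    (Set.mem_union_left _ (Set.mem_union_left _ (Set.mem_union_left _
    (Set.mem_union_right _ ⟨c0, hc0, t, ht, rfl⟩))))))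

lemma mem_core8 {n : ℕ} {f : F} {t : ℕ} (ht : t < n) :
    (⟨[chi (FLit.pos f) (t+1)], [chi (FLit.pos f) t],
      [chi (FLit.neg f) (t+1), .pos (.u f (t+1))]⟩ :
      Rule (PAtom F E)) ∈ CoreProg AD n :=
  Set.mem_union_left _ (Set.mem_union_left _ (Set.mem_union_right _
    ⟨f, t, ht, rfl⟩))

lemma mem_core9 {n : ℕ} {f : F} {t : ℕ} (ht : t < n) :
    (⟨[chi (FLit.neg f) (t+1)], [chi (FLit.neg f) t],
      [chi (FLit.pos f) (t+1), .pos (.u f (t+1))]⟩ :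
      Rule (PAtom F E)) ∈ CoreProg AD n :=
  Set.mem_union_left _ (Set.mem_union_right _ ⟨f, t, ht, rfl⟩)

lemma mem_core10 {n : ℕ} {f : F} {t : ℕ} (ht : t < n) :
    (⟨[.pos (.u f (t+1))], [.pos (.u f t)],
      [chi (FLit.pos f) (t+1), chi (FLit.neg f) (t+1)]⟩ :
      Rule (PAtom F E)) ∈ CoreProg AD n :=
  Set.mem_union_right _ ⟨f, t, ht, rfl⟩

lemma mem_phi_core {n : ℕ} {s : QSeq F E n} {r : Rule (PAtom F E)}
    (hr : r ∈ CoreProg AD n) : r ∈ PhiProg AD σ0 s :=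
  Set.mem_union_left _ (Set.mem_union_left _ (Set.mem_union_left _ hr))

lemma mem_phi_factlit {n : ℕ} {s : QSeq F E n} {l : FLit F} (hl : l.toE ∈ σ0) :
    (fact (chi l 0) : Rule (PAtom F E)) ∈ PhiProg AD σ0 s :=
  Set.mem_union_left _ (Set.mem_union_left _ (Set.mem_union_right _ ⟨l, hl, rfl⟩))

lemma mem_phi_factu {n : ℕ} {s : QSeq F E n} {f : F} (hf : ELit.und f ∈ σ0) :
    (fact (.pos (.u f 0)) : Rule (PAtom F E)) ∈ PhiProg AD σ0 s :=
  Set.mem_union_left _ (Set.mem_union_right _ ⟨f, hf, rfl⟩)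

lemma mem_phi_occ {n : ℕ} {s : QSeq F E n} {i : Fin n} {e : E} (he : e ∈ s.acts i) :
    (fact (.pos (.occurs e (i : ℕ))) : Rule (PAtom F E)) ∈ PhiProg AD σ0 s :=
  Set.mem_union_right _ (Set.mem_union_left _ ⟨i, e, he, rfl⟩)

lemma mem_phi_split {n : ℕ} {s : QSeq F E n} {i : Fin n} {f : F}
    (hf : f ∈ s.quals i) :
    (fact (.pos (.split f (i : ℕ))) : Rule (PAtom F E)) ∈ PhiProg AD σ0 s :=
  Set.mem_union_right _ (Set.mem_union_right _ ⟨i, f, hf, rfl⟩)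

/-- Consistency of the encoding set. -/
lemma enc_consistent (hcon0 : ConsistentE σ0) (hcon1 : ConsistentE σ1) {q0 : Set F} :
    AConsistent (encSet σ0 σ1 a0 q0) := by
  rintro a ⟨hp, hn⟩
  cases a with
  | holds f t =>
    rcases enc_posholds.mp hp with ⟨rfl, hp'⟩ | ⟨rfl, hp'⟩ <;>
      rcases enc_negholds.mp hn with ⟨ht, hn'⟩ | ⟨ht, hn'⟩
    · exact (hcon0 f).1 ⟨hp', hn'⟩
    · simp at ht
    · simp at ht
    · exact (hcon1 f).1 ⟨hp', hn'⟩
  | u f t => exact enc_negother_u hn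
  | occurs e t => exact enc_negother_occurs hn
  | split f t => exact enc_negother_split hn
  | init f => simp [encSet] at hp
  | forced f => simp [encSet] at hp
  | dflt f => simp [encSet] at hp

/-- Closedness of the encoding set under the reduct. -/
lemma enc_closed
    (hcon0 : ConsistentE σ0) (hsc0 : ∀ c0 ∈ AD.sc, ClosedUnderSC c0 σ0)
    (hcom1 : CompleteE σ1) (hcon1 : ConsistentE σ1)
    (hsc1 : ∀ c0 ∈ AD.sc, ClosedUnderSC c0 σ1)
    (hex : Executable AD a0 σ0)
    (hc : ∀ f, ELit.und f ∈ directEff AD a0 σ0 →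
      (c f = .pos f ∨ c f = .neg f ∨ c f = .und f))
    (hσ1 : σ1 = Cn AD.sc (({l ∈ directEff AD a0 σ0 | l.isLit} ∪
      {l | ∃ f, ELit.und f ∈ directEff AD a0 σ0 ∧ l = c f}) ∪ (σ0 ∩ σ1))) :
    ∀ r ∈ Reduct (PhiProg AD σ0 (⟨fun _ => a0, fun _ => qv AD a0 σ0 c⟩ : QSeq F E 1))
        (encSet σ0 σ1 a0 (qv AD a0 σ0 c)),
      ClosedRule r (encSet σ0 σ1 a0 (qv AD a0 σ0 c)) := by
  set q0 := qv AD a0 σ0 c with hq0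
  set A := encSet σ0 σ1 a0 q0 with hA
  have hW1 : ∀ x, x ∈ ({l ∈ directEff AD a0 σ0 | l.isLit} ∪
      {l | ∃ f, ELit.und f ∈ directEff AD a0 σ0 ∧ l = c f}) → x ∈ σ1 := by
    intro x hx
    rw [hσ1]
    exact subset_Cn (Or.inl hx)
  rintro r' ⟨r, hrP, hN, rfl⟩
  rintro ⟨hbP, -⟩
  simp only [PhiProg, CoreProg, occSplitFacts, Set.mem_union, Set.mem_setOf_eq] at hrP
  rcases hrP with (((((((((((h | h) | h) | h) | h) | h) | h) | h) | h) | h) | h) | h) |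
    (h | h)
  -- dynamic law, fluent-literal consequence
  · obtain ⟨d, hd, t, ht, l, heff, rfl⟩ := h
    obtain rfl : t = 0 := Nat.lt_one_iff.mp ht
    have hact : d.act ∈ a0 := by
      have := hbP _ (List.mem_cons_self)
      exact (enc_occurs.mp this).2
    have hcond : ∀ b ∈ d.cond, FLit.toE b ∈ σ0 := by
      intro b hb
      have := hbP _ (List.mem_cons_of_mem _ (List.mem_map_of_mem hb))
      rcases enc_chi.mp this with ⟨-, h'⟩ | ⟨h', -⟩
      · exact h'
      · simp at h'
    have hde : l.toE ∈ directEff AD a0 σ0 := ⟨d, hd, hact, hcond, heff.symm⟩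
    have hσ : l.toE ∈ σ1 := hW1 _ (Or.inl ⟨hde, by cases l <;> simp [FLit.toE, ELit.isLit]⟩)
    exact ⟨chi l 1, by simp, enc_chi.mpr (Or.inr ⟨rfl, hσ⟩)⟩
  -- dynamic law, u(f) consequence, non-split rule
  · obtain ⟨d, hd, t, ht, f, heff, rfl⟩ := h
    obtain rfl : t = 0 := Nat.lt_one_iff.mp ht
    have hact : d.act ∈ a0 := by
      have := hbP _ (List.mem_cons_self)
      exact (enc_occurs.mp this).2
    have hcond : ∀ b ∈ d.cond, FLit.toE b ∈ σ0 := by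
      intro b hb
      have := hbP _ (List.mem_cons_of_mem _ (List.mem_map_of_mem hb))
      rcases enc_chi.mp this with ⟨-, h'⟩ | ⟨h', -⟩
      · exact h'
      · simp at h'
    have hde : ELit.und f ∈ directEff AD a0 σ0 := ⟨d, hd, hact, hcond, heff.symm⟩
    have hnq : f ∉ q0 := by
      intro hq
      exact hN _ (by simp) (enc_split.mpr ⟨rfl, hq⟩)
    have hcf : c f = ELit.und f := by
      by_contra hne
      exact hnq ⟨hde, hne⟩
    have hσ : ELit.und f ∈ σ1 := by
      have := hW1 (c f) (Or.inr ⟨f, hde, rfl⟩)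
      rwa [hcf] at this
    exact ⟨.pos (.u f 1), by simp, enc_u.mpr (Or.inr ⟨rfl, hσ⟩)⟩
  -- dynamic law, u(f) consequence, split rule
  · obtain ⟨d, hd, t, ht, f, heff, rfl⟩ := h
    obtain rfl : t = 0 := Nat.lt_one_iff.mp ht
    have hsp : f ∈ q0 := by
      have := hbP _ (List.mem_cons_of_mem _ (List.mem_cons_self))
      exact (enc_split.mp this).2
    have hcfσ : c f ∈ σ1 := hW1 _ (Or.inr ⟨f, hsp.1, rfl⟩)
    rcases hc f hsp.1 with hcf | hcf | hcf
    · rw [hcf] at hcfσ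
      exact ⟨chi (FLit.pos f) 1, by simp,
        enc_chi.mpr (Or.inr ⟨rfl, hcfσ⟩)⟩
    · rw [hcf] at hcfσ
      exact ⟨chi (FLit.neg f) 1, by simp,
        enc_chi.mpr (Or.inr ⟨rfl, hcfσ⟩)⟩
    · exact (hsp.2 hcf).elim
  -- state constraints
  · obtain ⟨c0, hc0, t, ht, rfl⟩ := h
    have hbody : ∀ b ∈ c0.body, (chi b t : ALit (PAtom F E)) ∈ A := by
      intro b hb
      exact hbP _ (List.mem_map_of_mem hb)
    rcases Nat.le_one_iff_eq_zero_or_eq_one.mp ht with rfl | rfl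
    · have : c0.head.toE ∈ σ0 := by
        apply hsc0 c0 hc0
        intro b hb
        rcases enc_chi.mp (hbody b hb) with ⟨-, h'⟩ | ⟨h', -⟩
        · exact h'
        · simp at h'
      exact ⟨chi c0.head 0, by simp, enc_chi.mpr (Or.inl ⟨rfl, this⟩)⟩
    · have : c0.head.toE ∈ σ1 := by
        apply hsc1 c0 hc0
        intro b hb
        rcases enc_chi.mp (hbody b hb) with ⟨h', -⟩ | ⟨-, h'⟩
        · simp at h'
        · exact h'
      exact ⟨chi c0.head 1, by simp, enc_chi.mpr (Or.inr ⟨rfl, this⟩)⟩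
  -- executability conditions
  · obtain ⟨ec, hec, t, ht, rfl⟩ := h
    obtain rfl : t = 0 := Nat.lt_one_iff.mp ht
    have hact : ec.act ∈ a0 := by
      have := hbP _ (List.mem_cons_self)
      exact (enc_occurs.mp this).2
    have hcond : ∀ b ∈ ec.cond, FLit.toE b ∈ σ0 := by
      intro b hb
      have := hbP _ (List.mem_cons_of_mem _ (List.mem_map_of_mem hb))
      rcases enc_chi.mp this with ⟨-, h'⟩ | ⟨h', -⟩
      · exact h'
      · simp at h'
    exact (hex ⟨ec, hec, hact, hcond⟩).elim
  -- consistency constraints (pos)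
  · obtain ⟨f, t, ht, rfl⟩ := h
    have h1 := hbP (chi (FLit.pos f) t) (by simp)
    have h2 := hbP (.pos (.u f t)) (by simp)
    rcases Nat.le_one_iff_eq_zero_or_eq_one.mp ht with rfl | rfl
    · rcases enc_chi.mp h1 with ⟨-, h1'⟩ | ⟨h', -⟩
      · rcases enc_u.mp h2 with ⟨-, h2'⟩ | ⟨h', -⟩
        · exact ((hcon0 f).2.1 ⟨h1', h2'⟩).elim
        · simp at h'
      · simp at h'
    · rcases enc_chi.mp h1 with ⟨h', -⟩ | ⟨-, h1'⟩
      · simp at h'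
      · rcases enc_u.mp h2 with ⟨h', -⟩ | ⟨-, h2'⟩
        · simp at h'
        · exact ((hcon1 f).2.1 ⟨h1', h2'⟩).elim
  -- consistency constraints (neg)
  · obtain ⟨f, t, ht, rfl⟩ := h
    have h1 := hbP (chi (FLit.neg f) t) (by simp)
    have h2 := hbP (.pos (.u f t)) (by simp)
    rcases Nat.le_one_iff_eq_zero_or_eq_one.mp ht with rfl | rfl
    · rcases enc_chi.mp h1 with ⟨-, h1'⟩ | ⟨h', -⟩
      · rcases enc_u.mp h2 with ⟨-, h2'⟩ | ⟨h', -⟩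
        · exact ((hcon0 f).2.2 ⟨h1', h2'⟩).elim
        · simp at h'
      · simp at h'
    · rcases enc_chi.mp h1 with ⟨h', -⟩ | ⟨-, h1'⟩
      · simp at h'
      · rcases enc_u.mp h2 with ⟨h', -⟩ | ⟨-, h2'⟩
        · simp at h'
        · exact ((hcon1 f).2.2 ⟨h1', h2'⟩).elim
  -- inertia (pos)
  · obtain ⟨f, t, ht, rfl⟩ := h
    obtain rfl : t = 0 := Nat.lt_one_iff.mp ht
    have hn1 : ELit.neg f ∉ σ1 := fun hmem =>
      hN (chi (FLit.neg f) 1) (by simp)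
        ((enc_chi (l := FLit.neg f)).mpr (Or.inr ⟨rfl, hmem⟩))
    have hu1 : ELit.und f ∉ σ1 := fun hmem =>
      hN _ (by simp) (enc_u.mpr (Or.inr ⟨rfl, hmem⟩))
    rcases hcom1 f with hmem | hmem | hmem
    · exact ⟨chi (FLit.pos f) 1, by simp,
        (enc_chi (l := FLit.pos f)).mpr (Or.inr ⟨rfl, hmem⟩)⟩
    · exact (hn1 hmem).elim
    · exact (hu1 hmem).elim
  -- inertia (neg)
  · obtain ⟨f, t, ht, rfl⟩ := h
    obtain rfl : t = 0 := Nat.lt_one_iff.mp ht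
    have hn1 : ELit.pos f ∉ σ1 := fun hmem =>
      hN (chi (FLit.pos f) 1) (by simp)
        ((enc_chi (l := FLit.pos f)).mpr (Or.inr ⟨rfl, hmem⟩))
    have hu1 : ELit.und f ∉ σ1 := fun hmem =>
      hN _ (by simp) (enc_u.mpr (Or.inr ⟨rfl, hmem⟩))
    rcases hcom1 f with hmem | hmem | hmem
    · exact (hn1 hmem).elim
    · exact ⟨chi (FLit.neg f) 1, by simp,
        (enc_chi (l := FLit.neg f)).mpr (Or.inr ⟨rfl, hmem⟩)⟩
    · exact (hu1 hmem).elim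
  -- inertia (u)
  · obtain ⟨f, t, ht, rfl⟩ := h
    obtain rfl : t = 0 := Nat.lt_one_iff.mp ht
    have hp1 : ELit.pos f ∉ σ1 := fun hmem =>
      hN (chi (FLit.pos f) 1) (by simp)
        ((enc_chi (l := FLit.pos f)).mpr (Or.inr ⟨rfl, hmem⟩))
    have hn1 : ELit.neg f ∉ σ1 := fun hmem =>
      hN (chi (FLit.neg f) 1) (by simp)
        ((enc_chi (l := FLit.neg f)).mpr (Or.inr ⟨rfl, hmem⟩))
    rcases hcom1 f with hmem | hmem | hmem
    · exact (hp1 hmem).elim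
    · exact (hn1 hmem).elim
    · exact ⟨.pos (.u f 1), by simp, enc_u.mpr (Or.inr ⟨rfl, hmem⟩)⟩
  -- initial facts (literals)
  · obtain ⟨l, hl, rfl⟩ := h
    exact ⟨chi l 0, by simp [fact], enc_chi.mpr (Or.inl ⟨rfl, hl⟩)⟩
  -- initial facts (u)
  · obtain ⟨f, hf, rfl⟩ := h
    exact ⟨.pos (.u f 0), by simp [fact], enc_u.mpr (Or.inl ⟨rfl, hf⟩)⟩
  -- occurs facts
  · obtain ⟨i, e, he, rfl⟩ := h
    have hi : (i : ℕ) = 0 := by omega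
    exact ⟨.pos (.occurs e (i : ℕ)), by simp [fact],
      by rw [hi]; exact enc_occurs.mpr ⟨rfl, he⟩⟩
  -- split facts
  · obtain ⟨i, f, hf, rfl⟩ := h
    have hi : (i : ℕ) = 0 := by omega
    exact ⟨.pos (.split f (i : ℕ)), by simp [fact],
      by rw [hi]; exact enc_split.mpr ⟨rfl, hf⟩⟩


/-- Minimality of the encoding set. -/
lemma enc_minimal
    (hcon1 : ConsistentE σ1)
    (hc : ∀ f, ELit.und f ∈ directEff AD a0 σ0 →
      (c f = .pos f ∨ c f = .neg f ∨ c f = .und f))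
    (hσ1 : σ1 = Cn AD.sc (({l ∈ directEff AD a0 σ0 | l.isLit} ∪
      {l | ∃ f, ELit.und f ∈ directEff AD a0 σ0 ∧ l = c f}) ∪ (σ0 ∩ σ1)))
    {T : Set (ALit (PAtom F E))}
    (hTcl : ∀ r ∈ Reduct (PhiProg AD σ0
        (⟨fun _ => a0, fun _ => qv AD a0 σ0 c⟩ : QSeq F E 1))
        (encSet σ0 σ1 a0 (qv AD a0 σ0 c)), ClosedRule r T)
    (hTA : T ⊆ encSet σ0 σ1 a0 (qv AD a0 σ0 c)) :
    encSet σ0 σ1 a0 (qv AD a0 σ0 c) ⊆ T := by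
  set q0 := qv AD a0 σ0 c with hq0
  set A := encSet σ0 σ1 a0 q0 with hA
  set s : QSeq F E 1 := ⟨fun _ => a0, fun _ => q0⟩ with hs
  have hW1 : ∀ x, x ∈ ({l ∈ directEff AD a0 σ0 | l.isLit} ∪
      {l | ∃ f, ELit.und f ∈ directEff AD a0 σ0 ∧ l = c f}) → x ∈ σ1 := by
    intro x hx
    rw [hσ1]
    exact subset_Cn (Or.inl hx)
  have hget : ∀ r ∈ PhiProg AD σ0 s, (∀ l ∈ r.bodyN, l ∉ A) →
      (∀ l ∈ r.bodyP, l ∈ T) → ∃ h ∈ r.head, h ∈ T := by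
    intro r hr hN hP
    exact hTcl (⟨r.head, r.bodyP, []⟩ : Rule (PAtom F E)) ⟨r, hr, hN, rfl⟩ ⟨hP, by simp⟩
  have hfl : ∀ l : FLit F, l.toE ∈ σ0 → (chi l 0 : ALit (PAtom F E)) ∈ T := by
    intro l hl
    obtain ⟨x, hx, hxT⟩ := hget _ (mem_phi_factlit hl) (by simp [fact]) (by simp [fact])
    simp only [fact, List.mem_singleton] at hx
    exact hx ▸ hxT
  have hfu : ∀ f : F, ELit.und f ∈ σ0 → (ALit.pos (.u f 0) : ALit (PAtom F E)) ∈ T := by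
    intro f hf
    obtain ⟨x, hx, hxT⟩ := hget _ (mem_phi_factu hf) (by simp [fact]) (by simp [fact])
    simp only [fact, List.mem_singleton] at hx
    exact hx ▸ hxT
  have hocc : ∀ e ∈ a0, (ALit.pos (.occurs e 0) : ALit (PAtom F E)) ∈ T := by
    intro e he
    obtain ⟨x, hx, hxT⟩ := hget _ (mem_phi_occ (i := (0 : Fin 1)) (e := e) he)
      (by simp [fact]) (by simp [fact])
    simp only [fact, List.mem_singleton] at hx
    exact hx ▸ hxT
  have hsplitT : ∀ f ∈ q0, (ALit.pos (.split f 0) : ALit (PAtom F E)) ∈ T := by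
    intro f hf
    obtain ⟨x, hx, hxT⟩ := hget _ (mem_phi_split (i := (0 : Fin 1)) (f := f) hf)
      (by simp [fact]) (by simp [fact])
    simp only [fact, List.mem_singleton] at hx
    exact hx ▸ hxT
  have hT1 : ∀ x ∈ σ1, x ∈ decodeState T 1 := by
    intro x hx
    rw [hσ1] at hx
    refine Cn_min ?_ ?_ hx
    · rintro y ((⟨hyE, hyL⟩ | ⟨f, hf, rfl⟩) | ⟨hy0, hy1⟩)
      · -- fluent-literal direct effect
        obtain ⟨l, rfl⟩ := exists_flit_of_isLit hyL
        obtain ⟨d, hd, hact, hcond, heff⟩ := hyE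
        obtain ⟨x', hx', hx'T⟩ := hget _
          (mem_phi_core (mem_core1 (t := 0) hd Nat.one_pos heff.symm))
          (by simp) (by
            intro z hz
            rcases List.mem_cons.mp hz with rfl | hz
            · exact hocc d.act hact
            · obtain ⟨b, hb, rfl⟩ := List.mem_map.mp hz
              exact hfl b (hcond b hb))
        simp only [List.mem_singleton] at hx'
        exact (decode_lit T l 1).mpr (hx' ▸ hx'T)
      · -- choice for u(f) direct effect
        have hcfσ : c f ∈ σ1 := hW1 _ (Or.inr ⟨f, hf, rfl⟩)
        obtain ⟨d, hd, hact, hcond, heff⟩ := hf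
        have hfde : ELit.und f ∈ directEff AD a0 σ0 := ⟨d, hd, hact, hcond, heff⟩
        rcases hc f hfde with hcf | hcf | hcf
        · -- c f = pos f
          have hfq : f ∈ q0 := ⟨hfde, by rw [hcf]; simp⟩
          obtain ⟨x', hx', hx'T⟩ := hget _
            (mem_phi_core (mem_core3 (t := 0) hd Nat.one_pos heff.symm))
            (by simp) (by
              intro z hz
              rcases List.mem_cons.mp hz with rfl | hz
              · exact hocc d.act hact
              rcases List.mem_cons.mp hz with rfl | hz
              · exact hsplitT f hfq
              · obtain ⟨b, hb, rfl⟩ := List.mem_map.mp hz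
                exact hfl b (hcond b hb))
          rcases List.mem_pair.mp hx' with rfl | rfl
          · rw [hcf]
            exact (decode_lit T (FLit.pos f) 1).mpr hx'T
          · have : ELit.neg f ∈ σ1 := by
              rcases enc_chi.mp (hTA hx'T) with ⟨h', -⟩ | ⟨-, h'⟩
              · simp at h'
              · exact h'
            rw [hcf] at hcfσ
            exact ((hcon1 f).1 ⟨hcfσ, this⟩).elim
        · -- c f = neg f
          have hfq : f ∈ q0 := ⟨hfde, by rw [hcf]; simp⟩
          obtain ⟨x', hx', hx'T⟩ := hget _
            (mem_phi_core (mem_core3 (t := 0) hd Nat.one_pos heff.symm))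
            (by simp) (by
              intro z hz
              rcases List.mem_cons.mp hz with rfl | hz
              · exact hocc d.act hact
              rcases List.mem_cons.mp hz with rfl | hz
              · exact hsplitT f hfq
              · obtain ⟨b, hb, rfl⟩ := List.mem_map.mp hz
                exact hfl b (hcond b hb))
          rcases List.mem_pair.mp hx' with rfl | rfl
          · have : ELit.pos f ∈ σ1 := by
              rcases enc_chi.mp (hTA hx'T) with ⟨h', -⟩ | ⟨-, h'⟩
              · simp at h'
              · exact h'
            rw [hcf] at hcfσ
            exact ((hcon1 f).1 ⟨this, hcfσ⟩).elim
          · rw [hcf]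
            exact (decode_lit T (FLit.neg f) 1).mpr hx'T
        · -- c f = und f
          have hnq : f ∉ q0 := fun hq => hq.2 hcf
          obtain ⟨x', hx', hx'T⟩ := hget _
            (mem_phi_core (mem_core2 (t := 0) hd Nat.one_pos heff.symm))
            (by
              intro z hz
              simp only [List.mem_singleton] at hz
              subst hz
              intro hzT
              exact hnq (enc_split.mp hzT).2)
            (by
              intro z hz
              rcases List.mem_cons.mp hz with rfl | hz
              · exact hocc d.act hact
              · obtain ⟨b, hb, rfl⟩ := List.mem_map.mp hz
                exact hfl b (hcond b hb))
          simp only [List.mem_singleton] at hx'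
          rw [hcf]
          exact (decode_und T f 1).mpr (hx' ▸ hx'T)
      · -- inertia
        cases' hy : y with f f f
        · subst hy
          obtain ⟨x', hx', hx'T⟩ := hget _
            (mem_phi_core (mem_core8 (f := f) (t := 0) Nat.one_pos))
            (by
              intro z hz
              rcases List.mem_pair.mp hz with rfl | rfl
              · intro hzT
                have : ELit.neg f ∈ σ1 := by
                  rcases enc_chi.mp hzT with ⟨h', -⟩ | ⟨-, h'⟩
                  · simp at h'
                  · exact h'
                exact (hcon1 f).1 ⟨hy1, this⟩
              · intro hzT
                have : ELit.und f ∈ σ1 := by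
                  rcases enc_u.mp hzT with ⟨h', -⟩ | ⟨-, h'⟩
                  · simp at h'
                  · exact h'
                exact (hcon1 f).2.1 ⟨hy1, this⟩)
            (by
              intro z hz
              simp only [List.mem_singleton] at hz
              subst hz
              exact hfl (FLit.pos f) hy0)
          simp only [List.mem_singleton] at hx'
          exact (decode_lit T (FLit.pos f) 1).mpr (hx' ▸ hx'T)
        · subst hy
          obtain ⟨x', hx', hx'T⟩ := hget _
            (mem_phi_core (mem_core9 (f := f) (t := 0) Nat.one_pos))
            (by
              intro z hz
              rcases List.mem_pair.mp hz with rfl | rfl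
              · intro hzT
                have : ELit.pos f ∈ σ1 := by
                  rcases enc_chi.mp hzT with ⟨h', -⟩ | ⟨-, h'⟩
                  · simp at h'
                  · exact h'
                exact (hcon1 f).1 ⟨this, hy1⟩
              · intro hzT
                have : ELit.und f ∈ σ1 := by
                  rcases enc_u.mp hzT with ⟨h', -⟩ | ⟨-, h'⟩
                  · simp at h'
                  · exact h'
                exact (hcon1 f).2.2 ⟨hy1, this⟩)
            (by
              intro z hz
              simp only [List.mem_singleton] at hz
              subst hz
              exact hfl (FLit.neg f) hy0)
          simp only [List.mem_singleton] at hx'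
          exact (decode_lit T (FLit.neg f) 1).mpr (hx' ▸ hx'T)
        · subst hy
          obtain ⟨x', hx', hx'T⟩ := hget _
            (mem_phi_core (mem_core10 (f := f) (t := 0) Nat.one_pos))
            (by
              intro z hz
              rcases List.mem_pair.mp hz with rfl | rfl
              · intro hzT
                have : ELit.pos f ∈ σ1 := by
                  rcases enc_chi.mp hzT with ⟨h', -⟩ | ⟨-, h'⟩
                  · simp at h'
                  · exact h'
                exact (hcon1 f).2.1 ⟨this, hy1⟩
              · intro hzT
                have : ELit.neg f ∈ σ1 := by
                  rcases enc_chi.mp hzT with ⟨h', -⟩ | ⟨-, h'⟩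
                  · simp at h'
                  · exact h'
                exact (hcon1 f).2.2 ⟨this, hy1⟩)
            (by
              intro z hz
              simp only [List.mem_singleton] at hz
              subst hz
              exact hfu f hy0)
          simp only [List.mem_singleton] at hx'
          exact (decode_und T f 1).mpr (hx' ▸ hx'T)
    · -- closure of the decoded state under state constraints
      intro c0 hc0 hb
      obtain ⟨x', hx', hx'T⟩ := hget _
        (mem_phi_core (mem_core4 (t := 1) hc0 (le_refl 1)))
        (by simp) (by
          intro z hz
          obtain ⟨b, hbmem, rfl⟩ := List.mem_map.mp hz
          exact (decode_lit T b 1).mp (hb b hbmem))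
      simp only [List.mem_singleton] at hx'
      exact (decode_lit T c0.head 1).mpr (hx' ▸ hx'T)
  -- every element of the encoding set is supported
  intro x hx
  simp only [hA, encSet, Set.mem_setOf_eq] at hx
  rcases hx with ⟨f, hf, rfl⟩ | ⟨f, hf, rfl⟩ | ⟨f, hf, rfl⟩ | ⟨f, hf, rfl⟩ |
    ⟨f, hf, rfl⟩ | ⟨f, hf, rfl⟩ | ⟨e, he, rfl⟩ | ⟨f, hf, rfl⟩
  · exact hfl (FLit.pos f) hf
  · exact hfl (FLit.neg f) hf
  · exact hfu f hf
  · exact (decode_lit T (FLit.pos f) 1).mp (hT1 _ hf)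
  · exact (decode_lit T (FLit.neg f) 1).mp (hT1 _ hf)
  · exact (decode_und T f 1).mp (hT1 _ hf)
  · exact hocc e he
  · exact hsplitT f hf

end stmt5aux


/-- Every transition `⟨σ₀,a₀,σ₁⟩` of `τ(AD)` is captured by some
answer set of `Φ¹(σ₀,a₀,q₀)` for some qualifier `q₀`. -/
theorem stmt5 {F E : Type} [Fintype F] (AD : ActionDesc F E)
    (σ0 : Set (ELit F)) (a0 : Set E) (σ1 : Set (ELit F))
    (h : IsTransition AD σ0 a0 σ1) :
    ∃ (q0 : Set F) (A : Set (ALit (PAtom F E))),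
      IsAnswerSet (PhiProg AD σ0 (⟨fun _ => a0, fun _ => q0⟩ : QSeq F E 1)) A ∧
      σ1 = decodeState A 1 := by
  classical
  obtain ⟨hs0, hs1, hex, W, hWmem, hσ1⟩ := h
  obtain ⟨c, hc, rfl⟩ := hWmem
  obtain ⟨hcom0, hcon0, hsc0⟩ := hs0
  obtain ⟨hcom1, hcon1, hsc1⟩ := hs1
  refine ⟨qv AD a0 σ0 c, encSet σ0 σ1 a0 (qv AD a0 σ0 c), ⟨?_, ?_, ?_⟩, ?_⟩
  · exact enc_consistent hcon0 hcon1
  · exact enc_closed hcon0 hsc0 hcom1 hcon1 hsc1 hex hc hσ1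
  · intro T hTcons hTcl hTA
    exact Set.Subset.antisymm hTA (enc_minimal hcon1 hc hσ1 hTcl hTA)
  · ext x
    cases x with
    | pos f =>
      constructor
      · intro hmem
        exact (decode_lit _ (FLit.pos f) 1).mpr
          ((enc_chi (l := FLit.pos f)).mpr (Or.inr ⟨rfl, hmem⟩))
      · intro hmem
        rcases (enc_chi (l := FLit.pos f)).mp
            ((decode_lit _ (FLit.pos f) 1).mp hmem) with ⟨h', -⟩ | ⟨-, h'⟩
        · simp at h'
        · exact h'
    | neg f =>
      constructor
      · intro hmem
        exact (decode_lit _ (FLit.neg f) 1).mpr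
          ((enc_chi (l := FLit.neg f)).mpr (Or.inr ⟨rfl, hmem⟩))
      · intro hmem
        rcases (enc_chi (l := FLit.neg f)).mp
            ((decode_lit _ (FLit.neg f) 1).mp hmem) with ⟨h', -⟩ | ⟨-, h'⟩
        · simp at h'
        · exact h'
    | und f =>
      constructor
      · intro hmem
        exact (decode_und _ f 1).mpr (enc_u.mpr (Or.inr ⟨rfl, hmem⟩))
      · intro hmem
        rcases enc_u.mp ((decode_und _ f 1).mp hmem) with ⟨h', -⟩ | ⟨-, h'⟩
        · simp at h'
        · exact h'

end ACIR
end

section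
/- Let AD be an action description of AL_IR, I a consistent set of fluent literals, and F a set of fluents. Every element of the completion γ(I,F) is a state of the transition diagram τ(AD), i.e., a complete and consistent set of extended literals closed under the state constraints of AD. -/
namespace ACIR


lemma cn_closed {F : Type} (Z : Set (StateConstraint F)) (S : Set (ELit F)) :
    ∀ c ∈ Z, ClosedUnderSC c (Cn Z S) := by
  intro c hc hbody
  intro T hT
  exact hT.2 c hc (fun l hl => Set.mem_sInter.mp (hbody l hl) T hT)

/-- Every element of the completion `γ(I,F)` is a state of `τ(AD)`:
a complete and consistent set of extended literals closed under the state
constraints of `AD`. -/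
theorem stmt15 {F E : Type} [Fintype F] (D : Set F) (AD : ActionDesc F E)
    (I : Set (ELit F)) (hlit : IsLitSet I) (hcons : ConsistentE I)
    (Fs : Set F) :
    ∀ σ ∈ gammaSet D AD I Fs,
      CompleteE σ ∧ ConsistentE σ ∧ ∀ c ∈ AD.sc, ClosedUnderSC c σ := by
  rintro σ ⟨I', hI', hex, rfl⟩
  set B := gammaBase D AD I' with hB
  have hposB : ∀ f : F, ELit.pos f ∈ gamma D AD I' → ELit.pos f ∈ B := by
    rintro f (h | ⟨f', _, heq⟩)
    · exact h
    · exact absurd heq (by simp)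
  have hnegB : ∀ f : F, ELit.neg f ∈ gamma D AD I' → ELit.neg f ∈ B := by
    rintro f (h | ⟨f', _, heq⟩)
    · exact h
    · exact absurd heq (by simp)
  have hund : ∀ f : F, ELit.und f ∈ gamma D AD I' →
      ELit.und f ∈ B ∨ ¬ fOccurs f B := by
    rintro f (h | ⟨f', hno, heq⟩)
    · exact Or.inl h
    · cases heq; exact Or.inr hno
  refine ⟨?_, ?_, ?_⟩
  · intro f
    by_cases h : fOccurs f B
    · obtain ⟨l, hl, hfl⟩ := h
      cases l with
      | pos g => cases hfl; exact Or.inl (Or.inl hl)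
      | neg g => cases hfl; exact Or.inr (Or.inl (Or.inl hl))
      | und g => cases hfl; exact Or.inr (Or.inr (Or.inl hl))
    · exact Or.inr (Or.inr (Or.inr ⟨f, h, rfl⟩))
  · intro f
    refine ⟨?_, ?_, ?_⟩
    · rintro ⟨hp, hn⟩
      exact (hex f).1 ⟨hposB f hp, hnegB f hn⟩
    · rintro ⟨hp, hu⟩
      rcases hund f hu with h | h
      · exact (hex f).2.1 ⟨hposB f hp, h⟩
      · exact h ⟨ELit.pos f, hposB f hp, rfl⟩
    · rintro ⟨hn, hu⟩
      rcases hund f hu with h | h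
      · exact (hex f).2.2 ⟨hnegB f hn, h⟩
      · exact h ⟨ELit.neg f, hnegB f hn, rfl⟩
  · intro c hc hbody
    have hbodyB : ∀ l ∈ c.body, l.toE ∈ B := by
      intro l hl
      rcases hbody l hl with h | ⟨f', _, heq⟩
      · exact h
      · cases l <;> simp [FLit.toE] at heq
    exact Or.inl (cn_closed AD.sc _ c hc hbodyB)


end ACIR
end
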